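/- For every integer k ≥ 0, the integral over [0, 2π] of e^{iky} / ((1+r²) + (r²−1)cos(y)) dy equals (π/r)·((1−r)/(1+r))^k, for any real r with 0 < r < 1. -/

import Mathlib

open Real Complex intervalIntegral

noncomputable section PoissonAux

namespace PoissonAux

lemma den_ne {a : ℝ} (ha0 : 0 ≤ a) (ha1 : a < 1) (y : ℝ) :
    (1 : ℂ) - (a : ℂ) * Complex.exp ((y : ℂ) * Complex.I) ≠ 0 := by
  intro h
  have h1 : (a : ℂ) * Complex.exp ((y : ℂ) * Complex.I) = 1 := by linear_combination -h
  have h2 : ‖(a : ℂ) * Complex.exp ((y : ℂ) * Complex.I)‖ = 1 := by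
    rw [h1]; simp
  rw [norm_mul, Complex.norm_exp_ofReal_mul_I, mul_one, Complex.norm_real, Real.norm_eq_abs,
    _root_.abs_of_nonneg ha0] at h2
  linarith

lemma den_ne' {a : ℝ} (ha0 : 0 ≤ a) (ha1 : a < 1) (y : ℝ) :
    (1 : ℂ) - (a : ℂ) * Complex.exp (-((y : ℂ) * Complex.I)) ≠ 0 := by
  have := den_ne ha0 ha1 (-y)
  simpa [neg_mul] using this

/-- `∫ e^{iky} dy = 2π` if `k = 0` else `0`. -/
lemma E_val (k : ℕ) :
    (∫ y in (0:ℝ)..(2*π), Complex.exp ((k : ℂ) * y * Complex.I))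
      = if k = 0 then (2*π : ℂ) else 0 := by
  rcases Nat.eq_zero_or_pos k with hk | hk
  · subst hk; simp
  · have hk0 : (k : ℂ) * Complex.I ≠ 0 :=
      mul_ne_zero (Nat.cast_ne_zero.mpr hk.ne') Complex.I_ne_zero
    have h := integral_exp_mul_complex (a := 0) (b := 2*π) hk0
    have harg : ∀ y : ℝ, (k : ℂ) * y * Complex.I = (k : ℂ) * Complex.I * y := by
      intro y; ring
    simp_rw [harg]
    rw [h]
    have h2 : (k : ℂ) * Complex.I * ((2:ℝ)*π : ℝ) = (k : ℤ) * (2 * π * Complex.I) := by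
      push_cast; ring
    rw [h2, Complex.exp_int_mul_two_pi_mul_I]
    simp [hk.ne']

lemma cont_exp (k : ℕ) : Continuous fun y : ℝ => Complex.exp ((k : ℂ) * y * Complex.I) := by
  fun_prop

lemma cont_den : Continuous fun y : ℝ => (1 : ℂ) - (2 : ℝ) * Complex.exp ((y:ℂ) * Complex.I) := by
  fun_prop

end PoissonAux

namespace PoissonAux

lemma hasDerivAt_cexp (c : ℂ) (x : ℝ) :
    HasDerivAt (fun y : ℝ => Complex.exp (c * y)) (Complex.exp (c * x) * c) x := by
  have h1 : HasDerivAt (fun y : ℝ => c * (y : ℂ)) c x := by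
    simpa using ((hasDerivAt_id x).ofReal_comp).const_mul c
  exact (Complex.hasDerivAt_exp _).comp x h1

lemma slit_pos {a : ℝ} (ha0 : 0 ≤ a) (ha1 : a < 1) (x : ℝ) :
    (1 : ℂ) - (a : ℂ) * Complex.exp ((x:ℂ) * Complex.I) ∈ Complex.slitPlane := by
  rw [Complex.mem_slitPlane_iff]
  left
  have hre : (Complex.exp ((x:ℂ) * Complex.I)).re = Real.cos x :=
    Complex.exp_ofReal_mul_I_re x
  have him : (Complex.exp ((x:ℂ) * Complex.I)).im = Real.sin x :=
    Complex.exp_ofReal_mul_I_im x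
  simp only [Complex.sub_re, Complex.one_re, Complex.mul_re, Complex.ofReal_re,
    Complex.ofReal_im, zero_mul, sub_zero, hre, him]
  nlinarith [Real.cos_le_one x, Real.neg_one_le_cos x]

lemma slit_neg {a : ℝ} (ha0 : 0 ≤ a) (ha1 : a < 1) (x : ℝ) :
    (1 : ℂ) - (a : ℂ) * Complex.exp (-((x:ℂ) * Complex.I)) ∈ Complex.slitPlane := by
  have := slit_pos ha0 ha1 (-x)
  simpa [neg_mul] using this

end PoissonAux

namespace PoissonAux

lemma hasDerivAt_expI (x : ℝ) :
    HasDerivAt (fun y : ℝ => Complex.exp ((y:ℂ) * Complex.I))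
      (Complex.exp ((x:ℂ) * Complex.I) * Complex.I) x := by
  have := hasDerivAt_cexp Complex.I x
  simpa [mul_comm] using this

lemma hasDerivAt_expNegI (x : ℝ) :
    HasDerivAt (fun y : ℝ => Complex.exp (-((y:ℂ) * Complex.I)))
      (Complex.exp (-((x:ℂ) * Complex.I)) * (-Complex.I)) x := by
  have := hasDerivAt_cexp (-Complex.I) x
  simpa [neg_mul, mul_comm] using this

lemma hasDerivAt_F_pos {a : ℝ} (ha0 : 0 ≤ a) (ha1 : a < 1) (x : ℝ) :
    HasDerivAt (fun y : ℝ => (y:ℂ) + Complex.I *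
        Complex.log (1 - (a:ℂ) * Complex.exp ((y:ℂ) * Complex.I)))
      (1 / (1 - (a:ℂ) * Complex.exp ((x:ℂ) * Complex.I))) x := by
  have hy : HasDerivAt (fun y : ℝ => ((y:ℝ):ℂ)) 1 x :=
    (hasDerivAt_id ((x:ℝ):ℂ)).comp_ofReal
  have hg : HasDerivAt (fun y : ℝ => (1 : ℂ) - (a:ℂ) * Complex.exp ((y:ℂ) * Complex.I))
      (-((a:ℂ) * (Complex.exp ((x:ℂ) * Complex.I) * Complex.I))) x :=
    ((hasDerivAt_expI x).const_mul (a:ℂ)).const_sub 1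
  have hlog := (hg.clog_real (slit_pos ha0 ha1 x)).const_mul Complex.I
  have h := hy.add hlog
  convert h using 1
  · rfl
  · rfl
  have hne := den_ne ha0 ha1 x
  field_simp
  ring_nf
  rw [Complex.I_sq]
  ring

lemma hasDerivAt_F_neg {a : ℝ} (ha0 : 0 ≤ a) (ha1 : a < 1) (x : ℝ) :
    HasDerivAt (fun y : ℝ => (y:ℂ) - Complex.I *
        Complex.log (1 - (a:ℂ) * Complex.exp (-((y:ℂ) * Complex.I))))
      (1 / (1 - (a:ℂ) * Complex.exp (-((x:ℂ) * Complex.I)))) x := by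
  have hy : HasDerivAt (fun y : ℝ => ((y:ℝ):ℂ)) 1 x :=
    (hasDerivAt_id ((x:ℝ):ℂ)).comp_ofReal
  have hg : HasDerivAt (fun y : ℝ => (1 : ℂ) - (a:ℂ) * Complex.exp (-((y:ℂ) * Complex.I)))
      (-((a:ℂ) * (Complex.exp (-((x:ℂ) * Complex.I)) * (-Complex.I)))) x :=
    ((hasDerivAt_expNegI x).const_mul (a:ℂ)).const_sub 1
  have hlog := (hg.clog_real (slit_neg ha0 ha1 x)).const_mul Complex.I
  have h := hy.sub hlog
  convert h using 1
  · rfl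
  · rfl
  have hne := den_ne' ha0 ha1 x
  field_simp
  ring_nf
  rw [Complex.I_sq]
  ring

end PoissonAux

namespace PoissonAux

lemma contG {a : ℝ} (ha0 : 0 ≤ a) (ha1 : a < 1) (k : ℕ) :
    Continuous fun y : ℝ =>
      Complex.exp ((k:ℂ) * y * Complex.I) / (1 - (a:ℂ) * Complex.exp ((y:ℂ) * Complex.I)) :=
  (cont_exp k).div (by fun_prop) (fun y => den_ne ha0 ha1 y)

lemma contJ {a : ℝ} (ha0 : 0 ≤ a) (ha1 : a < 1) (k : ℕ) :
    Continuous fun y : ℝ =>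
      Complex.exp ((k:ℂ) * y * Complex.I) / (1 - (a:ℂ) * Complex.exp (-((y:ℂ) * Complex.I))) :=
  (cont_exp k).div (by fun_prop) (fun y => den_ne' ha0 ha1 y)

lemma G0 {a : ℝ} (ha0 : 0 ≤ a) (ha1 : a < 1) :
    (∫ y in (0:ℝ)..(2*π), 1 / (1 - (a:ℂ) * Complex.exp ((y:ℂ) * Complex.I))) = 2*π := by
  rw [intervalIntegral.integral_eq_sub_of_hasDerivAt
      (fun x _ => hasDerivAt_F_pos ha0 ha1 x)
      ((continuous_const.div (by fun_prop) (fun y => den_ne ha0 ha1 y)).intervalIntegrable _ _)]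
  have h2 : Complex.exp (((2*π : ℝ):ℂ) * Complex.I) = 1 := by
    push_cast; exact Complex.exp_two_pi_mul_I
  rw [h2]
  push_cast
  simp

lemma J0 {a : ℝ} (ha0 : 0 ≤ a) (ha1 : a < 1) :
    (∫ y in (0:ℝ)..(2*π), 1 / (1 - (a:ℂ) * Complex.exp (-((y:ℂ) * Complex.I)))) = 2*π := by
  rw [intervalIntegral.integral_eq_sub_of_hasDerivAt
      (fun x _ => hasDerivAt_F_neg ha0 ha1 x)
      ((continuous_const.div (by fun_prop) (fun y => den_ne' ha0 ha1 y)).intervalIntegrable _ _)]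
  have h2 : Complex.exp (-(((2*π : ℝ):ℂ) * Complex.I)) = 1 := by
    rw [Complex.exp_neg]; push_cast; rw [Complex.exp_two_pi_mul_I]; simp
  rw [h2]
  push_cast
  simp

end PoissonAux

namespace PoissonAux

lemma exp_succ (k : ℕ) (y : ℝ) :
    Complex.exp (((k+1 : ℕ):ℂ) * y * Complex.I)
      = Complex.exp ((k:ℂ) * y * Complex.I) * Complex.exp ((y:ℂ) * Complex.I) := by
  rw [← Complex.exp_add]
  push_cast
  ring_nf

lemma G_rel {a : ℝ} (ha0 : 0 ≤ a) (ha1 : a < 1) (k : ℕ) :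
    (∫ y in (0:ℝ)..(2*π),
        Complex.exp ((k:ℂ) * y * Complex.I) / (1 - (a:ℂ) * Complex.exp ((y:ℂ) * Complex.I)))
      = (∫ y in (0:ℝ)..(2*π), Complex.exp ((k:ℂ) * y * Complex.I))
        + (a:ℂ) * ∫ y in (0:ℝ)..(2*π),
            Complex.exp (((k+1:ℕ):ℂ) * y * Complex.I)
              / (1 - (a:ℂ) * Complex.exp ((y:ℂ) * Complex.I)) := by
  have key : ∀ y : ℝ,
      Complex.exp ((k:ℂ) * y * Complex.I) / (1 - (a:ℂ) * Complex.exp ((y:ℂ) * Complex.I))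
        = Complex.exp ((k:ℂ) * y * Complex.I)
          + (a:ℂ) * (Complex.exp (((k+1:ℕ):ℂ) * y * Complex.I)
              / (1 - (a:ℂ) * Complex.exp ((y:ℂ) * Complex.I))) := by
    intro y
    have hne := den_ne ha0 ha1 y
    have hE := exp_succ k y
    push_cast at hE ⊢
    field_simp
    rw [show (y:ℂ) * Complex.I * ((k:ℂ) + 1) = ((k:ℂ) + 1) * y * Complex.I by ring]
    linear_combination (-(a:ℂ)) * hE
  simp_rw [key]
  rw [intervalIntegral.integral_add ((cont_exp k).intervalIntegrable _ _)
      (((contG ha0 ha1 (k+1)).intervalIntegrable _ _).const_mul (a:ℂ)),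
    intervalIntegral.integral_const_mul]

lemma J_rel {a : ℝ} (ha0 : 0 ≤ a) (ha1 : a < 1) (k : ℕ) :
    (∫ y in (0:ℝ)..(2*π),
        Complex.exp (((k+1:ℕ):ℂ) * y * Complex.I)
          / (1 - (a:ℂ) * Complex.exp (-((y:ℂ) * Complex.I))))
      = (∫ y in (0:ℝ)..(2*π), Complex.exp (((k+1:ℕ):ℂ) * y * Complex.I))
        + (a:ℂ) * ∫ y in (0:ℝ)..(2*π),
            Complex.exp ((k:ℂ) * y * Complex.I)
              / (1 - (a:ℂ) * Complex.exp (-((y:ℂ) * Complex.I))) := by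
  have key : ∀ y : ℝ,
      Complex.exp (((k+1:ℕ):ℂ) * y * Complex.I)
          / (1 - (a:ℂ) * Complex.exp (-((y:ℂ) * Complex.I)))
        = Complex.exp (((k+1:ℕ):ℂ) * y * Complex.I)
          + (a:ℂ) * (Complex.exp ((k:ℂ) * y * Complex.I)
              / (1 - (a:ℂ) * Complex.exp (-((y:ℂ) * Complex.I)))) := by
    intro y
    have hne := den_ne' ha0 ha1 y
    have hE := exp_succ k y
    have hmul : Complex.exp ((y:ℂ) * Complex.I) * Complex.exp (-((y:ℂ) * Complex.I)) = 1 := by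
      rw [← Complex.exp_add]; simp
    push_cast at hE ⊢
    field_simp
    linear_combination (a:ℂ) * Complex.exp (-((y:ℂ) * Complex.I)) * hE
      + (a:ℂ) * Complex.exp ((k:ℂ) * y * Complex.I) * hmul
  simp_rw [key]
  rw [intervalIntegral.integral_add ((cont_exp (k+1)).intervalIntegrable _ _)
      (((contJ ha0 ha1 k).intervalIntegrable _ _).const_mul (a:ℂ)),
    intervalIntegral.integral_const_mul]

end PoissonAux

namespace PoissonAux

lemma G_val {a : ℝ} (ha0 : 0 < a) (ha1 : a < 1) (k : ℕ) :
    (∫ y in (0:ℝ)..(2*π),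
        Complex.exp ((k:ℂ) * y * Complex.I) / (1 - (a:ℂ) * Complex.exp ((y:ℂ) * Complex.I)))
      = if k = 0 then (2*π : ℂ) else 0 := by
  have haC : (a:ℂ) ≠ 0 := Complex.ofReal_ne_zero.mpr ha0.ne'
  have hzero : (∫ y in (0:ℝ)..(2*π),
      Complex.exp (((0:ℕ):ℂ) * y * Complex.I) / (1 - (a:ℂ) * Complex.exp ((y:ℂ) * Complex.I)))
      = 2*π := by
    simp_rw [Nat.cast_zero, zero_mul, Complex.exp_zero]
    exact G0 ha0.le ha1
  have hsucc : ∀ n : ℕ, (∫ y in (0:ℝ)..(2*π),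
      Complex.exp (((n+1:ℕ):ℂ) * y * Complex.I)
        / (1 - (a:ℂ) * Complex.exp ((y:ℂ) * Complex.I))) = 0 := by
    intro n
    induction n with
    | zero =>
      have h := G_rel ha0.le ha1 0
      rw [hzero, E_val 0, if_pos rfl] at h
      have : (a:ℂ) * (∫ y in (0:ℝ)..(2*π),
          Complex.exp (((0+1:ℕ):ℂ) * y * Complex.I)
            / (1 - (a:ℂ) * Complex.exp ((y:ℂ) * Complex.I))) = 0 := by
        linear_combination -h
      simpa [haC] using (mul_eq_zero.mp this).resolve_left haC
    | succ m ih =>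
      have h := G_rel ha0.le ha1 (m+1)
      rw [ih, E_val (m+1), if_neg (Nat.succ_ne_zero m)] at h
      have : (a:ℂ) * (∫ y in (0:ℝ)..(2*π),
          Complex.exp (((m+1+1:ℕ):ℂ) * y * Complex.I)
            / (1 - (a:ℂ) * Complex.exp ((y:ℂ) * Complex.I))) = 0 := by
        linear_combination -h
      exact (mul_eq_zero.mp this).resolve_left haC
  cases k with
  | zero => simpa using hzero
  | succ n => simpa using hsucc n

lemma J_val {a : ℝ} (ha0 : 0 ≤ a) (ha1 : a < 1) (k : ℕ) :
    (∫ y in (0:ℝ)..(2*π),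
        Complex.exp ((k:ℂ) * y * Complex.I)
          / (1 - (a:ℂ) * Complex.exp (-((y:ℂ) * Complex.I))))
      = 2*π * (a:ℂ)^k := by
  induction k with
  | zero =>
    simp_rw [Nat.cast_zero, zero_mul, Complex.exp_zero]
    rw [J0 ha0 ha1]; ring
  | succ n ih =>
    have h := J_rel ha0 ha1 n
    rw [ih, E_val (n+1), if_neg (Nat.succ_ne_zero n)] at h
    rw [h]; ring

end PoissonAux

end PoissonAux

open PoissonAux
theorem integral_exp_over_kernel (r : ℝ) (hr0 : 0 < r) (hr1 : r < 1) (k : ℕ) :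
    ∫ y in (0:ℝ)..(2 * π),
      Complex.exp (Complex.I * k * y) / (((1 + r ^ 2) + (r ^ 2 - 1) * Real.cos y : ℝ) : ℂ)
      = ((π / r * ((1 - r) / (1 + r)) ^ k : ℝ) : ℂ) := by
  set a : ℝ := (1 - r) / (1 + r) with ha_def
  have hr1' : (0:ℝ) < 1 + r := by linarith
  have ha0 : 0 < a := div_pos (by linarith) hr1'
  have ha1 : a < 1 := by
    rw [ha_def, div_lt_one hr1']; linarith
  have key : ∀ y : ℝ,
      Complex.exp (Complex.I * k * y) / (((1 + r ^ 2) + (r ^ 2 - 1) * Real.cos y : ℝ) : ℂ)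
        = ((1/(2*r) : ℝ) : ℂ) *
            (Complex.exp ((k:ℂ) * y * Complex.I) / (1 - (a:ℂ) * Complex.exp ((y:ℂ) * Complex.I))
             + Complex.exp ((k:ℂ) * y * Complex.I)
                / (1 - (a:ℂ) * Complex.exp (-((y:ℂ) * Complex.I)))
             - Complex.exp ((k:ℂ) * y * Complex.I)) := by
    intro y
    have hE0 : Complex.exp ((y:ℂ) * Complex.I) ≠ 0 := Complex.exp_ne_zero _
    have hinv : Complex.exp (-((y:ℂ) * Complex.I)) = (Complex.exp ((y:ℂ) * Complex.I))⁻¹ := by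
      rw [← Complex.exp_neg]
    have hcos : Complex.cos (y:ℂ)
        = (Complex.exp ((y:ℂ) * Complex.I) + (Complex.exp ((y:ℂ) * Complex.I))⁻¹) / 2 := by
      rw [← hinv]
      have h2c := Complex.two_cos (y:ℂ)
      rw [neg_mul] at h2c
      linear_combination h2c / 2
    have hCr : ((1 + r ^ 2) + (r ^ 2 - 1) * Real.cos y : ℝ) ≠ 0 := by
      have h1 := Real.cos_le_one y
      have h2 := Real.neg_one_le_cos y
      have h3 : (0:ℝ) ≤ (1 - r^2) * (1 - Real.cos y) :=
        mul_nonneg (by nlinarith) (by linarith)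
      have h4 : (0:ℝ) < r^2 := pow_pos hr0 2
      nlinarith
    have hCc : ((((1 + r ^ 2) + (r ^ 2 - 1) * Real.cos y : ℝ)) : ℂ) ≠ 0 :=
      Complex.ofReal_ne_zero.mpr hCr
    have hcast : ((((1 + r ^ 2) + (r ^ 2 - 1) * Real.cos y : ℝ)) : ℂ)
        = 1 + (r:ℂ)^2 + ((r:ℂ)^2 - 1) *
            ((Complex.exp ((y:ℂ) * Complex.I) + (Complex.exp ((y:ℂ) * Complex.I))⁻¹) / 2) := by
      push_cast
      rw [hcos]
    have h1 := den_ne ha0.le ha1 y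
    have h2 := den_ne' ha0.le ha1 y
    rw [hinv] at h2
    rw [show Complex.I * (k:ℂ) * (y:ℂ) = (k:ℂ) * y * Complex.I from by ring, hcast, hinv]
    rw [hcast] at hCc
    have haC : ((a:ℝ):ℂ) = (1 - (r:ℂ)) / (1 + (r:ℂ)) := by
      rw [ha_def]; push_cast; ring
    rw [haC] at h1 h2 ⊢
    have hr0' : (r:ℂ) ≠ 0 := Complex.ofReal_ne_zero.mpr hr0.ne'
    have hr1c : (1:ℂ) + r ≠ 0 := by
      intro h
      have : ((1 + r : ℝ) : ℂ) = 0 := by push_cast; linear_combination h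
      exact hr1'.ne' (by exact_mod_cast this)
    have hP : ((1:ℂ) + r) - (1 - (r:ℂ)) * Complex.exp ((y:ℂ) * Complex.I) ≠ 0 := by
      intro h
      apply h1
      field_simp
      linear_combination h
    have hQ : ((1:ℂ) + r) * Complex.exp ((y:ℂ) * Complex.I) - (1 - (r:ℂ)) ≠ 0 := by
      intro h
      apply h2
      field_simp
      linear_combination h
    rw [div_eq_iff hCc]
    push_cast
    field_simp
    ring
  simp_rw [key]
  rw [intervalIntegral.integral_const_mul,
    intervalIntegral.integral_sub
      (((contG ha0.le ha1 k).intervalIntegrable _ _).add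
        ((contJ ha0.le ha1 k).intervalIntegrable _ _))
      ((cont_exp k).intervalIntegrable _ _),
    intervalIntegral.integral_add ((contG ha0.le ha1 k).intervalIntegrable _ _)
      ((contJ ha0.le ha1 k).intervalIntegrable _ _),
    G_val ha0 ha1 k, J_val ha0.le ha1 k, E_val k]
  cases k with
  | zero =>
    simp only [if_pos rfl, pow_zero, mul_one]
    push_cast
    field_simp
    ring
  | succ n =>
    simp only [if_neg (Nat.succ_ne_zero n)]
    push_cast
    field_simp
    ring
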